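/- Let Ω be a finite set and let G be a solvable subgroup of the symmetric group on Ω acting primitively on Ω. If g ∈ G has odd prime order, then the number of cycles of g on Ω (that is, the number of orbits of the cyclic group ⟨g⟩ on Ω) is at most 5|Ω|/9. -/

import Mathlib

open Pointwise

def IsPrimitivePermGroup (Ω : Type*) [Fintype Ω] (G : Subgroup (Equiv.Perm Ω)) : Prop :=
  MulAction.IsPretransitive G Ω ∧
    ∀ B : Set Ω, MulAction.IsBlock G B → MulAction.IsTrivialBlock B

section LemA
variable {H : Type*} [Group H]

lemma card_two_uniq {R : Subgroup H} (h2 : Nat.card R = 2) {x y : H}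
    (hx : x ∈ R) (hy : y ∈ R) (hx1 : x ≠ 1) (hy1 : y ≠ 1) : x = y := by
  obtain ⟨a, b, hab, hU⟩ := Nat.card_eq_two_iff.mp h2
  have mem : ∀ z : R, z = a ∨ z = b := by
    intro z
    have : z ∈ ({a, b} : Set R) := hU ▸ Set.mem_univ z
    simpa using this
  have h1 : (⟨1, R.one_mem⟩ : R) = a ∨ (⟨1, R.one_mem⟩ : R) = b := mem _
  rcases mem ⟨x, hx⟩ with h | h <;> rcases mem ⟨y, hy⟩ with h' | h'
  · exact congrArg Subtype.val (h.trans h'.symm)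
  · rcases h1 with h1 | h1
    · exact absurd (congrArg Subtype.val (h.trans h1.symm)) hx1
    · exact absurd (congrArg Subtype.val (h'.trans h1.symm)) hy1
  · rcases h1 with h1 | h1
    · exact absurd (congrArg Subtype.val (h'.trans h1.symm)) hy1
    · exact absurd (congrArg Subtype.val (h.trans h1.symm)) hx1
  · exact congrArg Subtype.val (h.trans h'.symm)

lemma lemA [Finite H] (A : Subgroup H) (g : H)
    (hcomm : ∀ x ∈ A, ∀ y ∈ A, x * y = y * x)
    (hnorm : ∀ v ∈ A, g * v * g⁻¹ ∈ A)
    (hodd : Odd (orderOf g))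
    (hnt : ∃ v ∈ A, g * v * g⁻¹ ≠ v) :
    3 * Nat.card {v : A // g * ↑v * g⁻¹ = ↑v} ≤ Nat.card A := by
  classical
  have hmul : ∀ a b : A, ((g * ↑(a*b) * g⁻¹)⁻¹ * ↑(a*b) : H)
      = ((g * ↑a * g⁻¹)⁻¹ * ↑a) * ((g * ↑b * g⁻¹)⁻¹ * ↑b) := by
    rintro ⟨a, ha⟩ ⟨b, hb⟩
    simp only [Subgroup.coe_mul]
    have h1 : (g * b * g⁻¹)⁻¹ * ((g * a * g⁻¹)⁻¹ * a) = ((g * a * g⁻¹)⁻¹ * a) * (g * b * g⁻¹)⁻¹ := by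
      refine hcomm _ ?_ _ ?_
      · exact A.inv_mem (hnorm b hb)
      · exact A.mul_mem (A.inv_mem (hnorm a ha)) ha
    calc (g * (a * b) * g⁻¹)⁻¹ * (a * b)
        = (g * b * g⁻¹)⁻¹ * ((g * a * g⁻¹)⁻¹ * a) * b := by group
      _ = ((g * a * g⁻¹)⁻¹ * a) * (g * b * g⁻¹)⁻¹ * b := by rw [h1]
      _ = ((g * a * g⁻¹)⁻¹ * a) * ((g * b * g⁻¹)⁻¹ * b) := by group
  let Φ : A →* H := { toFun := fun a => (g * ↑a * g⁻¹)⁻¹ * ↑a,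
                      map_one' := by simp,
                      map_mul' := hmul }
  have hΦ : ∀ a : A, Φ a = (g * ↑a * g⁻¹)⁻¹ * ↑a := fun _ => rfl
  have hker : Nat.card Φ.ker = Nat.card {v : A // g * ↑v * g⁻¹ = ↑v} := by
    apply Nat.card_congr
    apply Equiv.subtypeEquivRight
    intro a
    rw [MonoidHom.mem_ker, hΦ, inv_mul_eq_one]
  have hcard : Nat.card A = Nat.card Φ.range * Nat.card Φ.ker := by
    rw [Subgroup.card_eq_card_quotient_mul_card_subgroup Φ.ker]
    congr 1
    exact Nat.card_congr (QuotientGroup.quotientKerEquivRange Φ).toEquiv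
  have hrange3 : 3 ≤ Nat.card Φ.range := by
    by_contra hlt
    push_neg at hlt
    interval_cases h : Nat.card Φ.range
    · exact absurd h (Nat.card_pos).ne'
    · -- range trivial : conjugation by g is trivial on A, contradiction
      have hbot : Φ.range = ⊥ := Subgroup.card_eq_one.mp h
      obtain ⟨v, hv, hv'⟩ := hnt
      apply hv'
      have hb : Φ ⟨v, hv⟩ = 1 := by
        have hm : Φ ⟨v, hv⟩ ∈ Φ.range := ⟨_, rfl⟩
        rwa [hbot, Subgroup.mem_bot] at hm
      rw [hΦ] at hb
      exact inv_mul_eq_one.mp hb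
    · -- range has order two
      have sq : ∀ x ∈ Φ.range, x * x = 1 := by
        intro x hx
        have h2 : orderOf (⟨x, hx⟩ : Φ.range) ∣ 2 := h ▸ orderOf_dvd_natCard _
        have h3 := orderOf_dvd_iff_pow_eq_one.mp h2
        have h4 := congrArg Subtype.val h3
        simpa [pow_two] using h4
      have hτrange : ∀ a : A, g * (Φ a) * g⁻¹ = Φ ⟨g * ↑a * g⁻¹, hnorm _ a.2⟩ := by
        intro a; rw [hΦ, hΦ]; simp only [mul_inv_rev, inv_inv]; group
      have τfix : ∀ a : A, g * (Φ a) * g⁻¹ = Φ a := by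
        intro a
        by_cases h1 : Φ a = 1
        · rw [h1]; group
        · refine card_two_uniq h ?_ ⟨_, rfl⟩ ?_ h1
          · rw [hτrange]; exact ⟨_, rfl⟩
          · intro hz
            apply h1
            have h5 : Φ a = g⁻¹ * (g * Φ a * g⁻¹) * g := by group
            rw [hz] at h5
            simpa using h5
      have τ2 : ∀ v ∈ A, g * (g * v * g⁻¹) * g⁻¹ = v := by
        intro v hv
        have hΦv : g * v * g⁻¹ = v * (Φ ⟨v, hv⟩)⁻¹ := by rw [hΦ]; group
        calc g * (g * v * g⁻¹) * g⁻¹ = g * (v * (Φ ⟨v,hv⟩)⁻¹) * g⁻¹ := by rw [← hΦv]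
          _ = (g * v * g⁻¹) * (g * (Φ ⟨v,hv⟩) * g⁻¹)⁻¹ := by group
          _ = (g * v * g⁻¹) * (Φ ⟨v,hv⟩)⁻¹ := by rw [τfix]
          _ = (v * (Φ ⟨v,hv⟩)⁻¹) * (Φ ⟨v,hv⟩)⁻¹ := by rw [← hΦv]
          _ = v * ((Φ ⟨v,hv⟩) * (Φ ⟨v,hv⟩))⁻¹ := by group
          _ = v := by rw [sq _ ⟨_, rfl⟩]; group
      have pow2 : ∀ k : ℕ, ∀ v ∈ A, g ^ (2*k) * v * (g ^ (2*k))⁻¹ = v := by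
        intro k
        induction k with
        | zero => intro v hv; simp
        | succ k ih =>
          intro v hv
          have h1 : g ^ (2*(k+1)) = g^2 * g^(2*k) := by
            rw [← pow_add]; ring_nf
          calc g ^ (2*(k+1)) * v * (g ^ (2*(k+1)))⁻¹
              = g^2 * (g^(2*k) * v * (g^(2*k))⁻¹) * (g^2)⁻¹ := by rw [h1]; group
            _ = g^2 * v * (g^2)⁻¹ := by rw [ih v hv]
            _ = g * (g * v * g⁻¹) * g⁻¹ := by rw [pow_two]; group
            _ = v := τ2 v hv
      obtain ⟨t, ht⟩ := hodd
      obtain ⟨v, hv, hv'⟩ := hnt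
      apply hv'
      have h1 : g ^ (2*(t+1)) = g := by
        have h2 : 2*(t+1) = orderOf g + 1 := by omega
        rw [h2, pow_add, pow_orderOf_eq_one, one_mul, pow_one]
      have h6 := pow2 (t+1) v hv
      rwa [h1] at h6
  calc 3 * Nat.card {v : A // g * ↑v * g⁻¹ = ↑v} = 3 * Nat.card Φ.ker := by rw [hker]
    _ ≤ Nat.card Φ.range * Nat.card Φ.ker := Nat.mul_le_mul_right _ hrange3
    _ = Nat.card A := hcard.symm

end LemA

open scoped commutatorElement

theorem stmt_6 {Ω : Type*} [Fintype Ω] (G : Subgroup (Equiv.Perm Ω))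
    (hsolv : IsSolvable G) (hprim : IsPrimitivePermGroup Ω G)
    (g : G) (hg : ∃ p : ℕ, p.Prime ∧ p ≠ 2 ∧ orderOf g = p) :
    (Nat.card (MulAction.orbitRel.Quotient (Subgroup.zpowers (g : Equiv.Perm Ω)) Ω) : ℝ) ≤
      5 * (Fintype.card Ω : ℝ) / 9 := by
  classical
  obtain ⟨p, hp, hp2, hordp⟩ := hg
  have hp3 : 3 ≤ p := by have := hp.two_le; omega
  set σ : Equiv.Perm Ω := (g : Equiv.Perm Ω) with hσ
  have hordσ : orderOf σ = p := by rw [← hordp]; exact orderOf_submonoid g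
  set n := Fintype.card Ω with hn
  set f := Nat.card (MulAction.fixedBy Ω σ) with hf
  set cQ := Nat.card (MulAction.orbitRel.Quotient (Subgroup.zpowers σ) Ω) with hcQ
  -- g is nontrivial
  have hg1 : g ≠ 1 := by
    intro h; rw [h, orderOf_one] at hordp; omega
  have hσ1 : σ ≠ 1 := by
    intro h
    apply hg1
    exact Subtype.ext h
  -- n ≥ 3
  have hn3 : 3 ≤ n := by
    by_contra h
    push_neg at h
    have hd : orderOf σ ∣ Nat.card (Equiv.Perm Ω) := orderOf_dvd_natCard σ
    rw [Nat.card_eq_fintype_card, Fintype.card_perm, hordσ] at hd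
    have hle : p ≤ Nat.factorial n := Nat.le_of_dvd (Nat.factorial_pos _) hd
    have hle2 : Nat.factorial n ≤ Nat.factorial 2 := Nat.factorial_le (by omega)
    simp [Nat.factorial] at hle2
    omega
  -- faithfulness of the action of G on Ω
  have hfaith : ∀ x : G, (∀ ω : Ω, x • ω = ω) → x = 1 := by
    intro x hx
    have hx1 : (x : Equiv.Perm Ω) = 1 := Equiv.ext fun ω => hx ω
    exact Subtype.ext hx1
  -- the last nontrivial term of the derived series
  have hstruct : ∃ k : ℕ, k ≠ 0 ∧ derivedSeries G k = ⊥ ∧ derivedSeries G (k-1) ≠ ⊥ := by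
    obtain ⟨m, hm⟩ := hsolv
    have hex : ∃ k, derivedSeries G k = ⊥ := ⟨m, hm⟩
    have hk0 : Nat.find hex ≠ 0 := by
      intro h
      have hkspec := Nat.find_spec hex
      rw [h] at hkspec
      have h1 : g ∈ (⊥ : Subgroup G) := by
        rw [← hkspec]; exact Subgroup.mem_top g
      exact hg1 (Subgroup.mem_bot.mp h1)
    exact ⟨Nat.find hex, hk0, Nat.find_spec hex, Nat.find_min hex (Nat.pred_lt hk0)⟩
  obtain ⟨k, hk0, hkspec, hAne0⟩ := hstruct
  set A : Subgroup G := derivedSeries G (k-1) with hA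
  have hAne : A ≠ ⊥ := hAne0
  have hAcomm : ∀ x ∈ A, ∀ y ∈ A, x * y = y * x := by
    intro x hx y hy
    have h1 : derivedSeries G ((k-1)+1) = ⊥ := by
      have hkk : k - 1 + 1 = k := by omega
      rw [hkk]; exact hkspec
    rw [derivedSeries_succ] at h1
    have h3 : ⁅x, y⁆ ∈ (⊥ : Subgroup G) := h1 ▸ Subgroup.commutator_mem_commutator hx hy
    have h4 : ⁅x, y⁆ = 1 := Subgroup.mem_bot.mp h3
    exact commutatorElement_eq_one_iff_mul_comm.mp h4
  haveI hAn : A.Normal := derivedSeries_normal _ _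
  have hAnorm : ∀ (x : G), ∀ v ∈ A, x * v * x⁻¹ ∈ A := fun x v hv => hAn.conj_mem v hv x
  -- a point with full A-orbit
  have hNE : Nonempty Ω := by rw [← Fintype.card_pos_iff]; omega
  have hα : ∃ α : Ω, MulAction.orbit A α = Set.univ := by
    by_contra hno
    push_neg at hno
    apply hAne
    rw [Subgroup.eq_bot_iff_forall]
    intro v hv
    apply hfaith
    intro ω
    have hb : MulAction.IsBlock G (MulAction.orbit A ω) := MulAction.IsBlock.orbit_of_normal ω
    rcases hprim.2 _ hb with hsub | huniv
    · exact hsub (MulAction.mem_orbit ω (⟨v, hv⟩ : A)) (MulAction.mem_orbit_self ω)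
    · exact absurd huniv (hno ω)
  obtain ⟨α, hαuniv⟩ := hα
  have htrans : ∀ β : Ω, ∃ v : A, (v : G) • α = β := by
    intro β
    have h1 : β ∈ MulAction.orbit A α := hαuniv ▸ Set.mem_univ β
    obtain ⟨v, hv⟩ := h1
    exact ⟨v, hv⟩
  have hfree : ∀ v : A, (v : G) • α = α → (v : G) = 1 := by
    intro v hvα
    apply hfaith
    intro ω
    obtain ⟨w, hw⟩ := htrans ω
    have hcw : (v : G) * (w : G) = (w : G) * (v : G) := hAcomm _ v.2 _ w.2
    calc (v : G) • ω = (v : G) • ((w : G) • α) := by rw [hw]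
      _ = ((v : G) * (w : G)) • α := (smul_smul _ _ _)
      _ = ((w : G) * (v : G)) • α := by rw [hcw]
      _ = (w : G) • ((v : G) • α) := (smul_smul _ _ _).symm
      _ = (w : G) • α := by rw [hvα]
      _ = ω := hw
  have einj : ∀ v w : A, (v : G) • α = (w : G) • α → v = w := by
    intro v w h
    have h1 : ((w : G)⁻¹ * (v : G)) • α = α := by
      rw [mul_smul, h, ← mul_smul, inv_mul_cancel, one_smul]
    have h2 := hfree (w⁻¹ * v) h1
    have h3 : (w : G)⁻¹ * (v : G) = 1 := h2
    have h4 : (v : G) = (w : G) := by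
      rw [inv_mul_eq_one] at h3; exact h3.symm
    exact Subtype.ext h4
  obtain ⟨u₀, hu₀⟩ := htrans ((g : G) • α)
  -- characterization of fixed points
  have hkey : ∀ v : A, (g : G) • ((v : G) • α) = ((g : G) * v * (g : G)⁻¹ * u₀) • α := by
    intro v
    have h1 : (g : G) * (v : G) = ((g : G) * v * (g : G)⁻¹) * (g : G) := by group
    rw [← mul_smul, h1, mul_smul, ← hu₀, ← mul_smul]
    congr 1
    group
  have hfixchar : ∀ v : A, (g : G) • ((v : G) • α) = (v : G) • α ↔
      (g : G) * v * (g : G)⁻¹ * u₀ = (v : G) := by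
    intro v
    constructor
    · intro h
      rw [hkey v] at h
      have h2 := einj ⟨_, A.mul_mem (hAnorm g v v.2) u₀.2⟩ v h
      exact congrArg Subtype.val h2
    · intro h
      rw [hkey v, h]
  -- Claim 1 : 3 * f ≤ n
  have h3f : 3 * f ≤ n := by
    by_cases hτ : ∀ v : G, v ∈ A → (g : G) * v * (g : G)⁻¹ = v
    · -- conjugation by g is trivial on A : then g has no fixed points at all
      have hgα : (g : G) • α ≠ α := by
        intro hfixα
        apply hg1
        apply hfaith
        intro ω
        obtain ⟨v, hv⟩ := htrans ω
        have hc : (g : G) * v = (v : G) * g := by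
          have h5 := hτ v v.2
          calc (g : G) * v = ((g : G) * v * (g : G)⁻¹) * g := by group
            _ = (v : G) * g := by rw [h5]
        have h6 : (g : G) • ω = ((g : G) * v) • α := by rw [← hv, mul_smul]
        rw [h6, hc, mul_smul, hfixα, hv]
      have hF : MulAction.fixedBy Ω σ = ∅ := by
        rw [Set.eq_empty_iff_forall_notMem]
        intro ω hω
        rw [MulAction.mem_fixedBy] at hω
        obtain ⟨v, hv⟩ := htrans ω
        apply hgα
        have hc : (g : G) * v = (v : G) * g := by
          have h5 := hτ v v.2
          calc (g : G) * v = ((g : G) * v * (g : G)⁻¹) * g := by group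
            _ = (v : G) * g := by rw [h5]
        have h1 : (g : G) • ω = ω := hω
        rw [← hv, ← mul_smul, hc, mul_smul] at h1
        exact smul_left_cancel _ h1
      have hf0 : f = 0 := by
        rw [hf, hF]
        simp
      omega
    · push_neg at hτ
      obtain ⟨v, hv, hvne⟩ := hτ
      have hA3 := lemA A (g : G) hAcomm (fun w hw => hAnorm g w hw)
        (by rw [hordp]; exact hp.odd_of_ne_two hp2) ⟨v, hv, hvne⟩
      have hcardA : Nat.card A = n := by
        rw [hn, ← Nat.card_eq_fintype_card]
        apply Nat.card_congr
        apply Equiv.ofBijective (fun v : A => (v : G) • α)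
        constructor
        · intro a b hab
          exact einj a b hab
        · intro β
          obtain ⟨w, hw⟩ := htrans β
          exact ⟨w, hw⟩
      have hfC : f ≤ Nat.card {v : A // (g : G) * ↑v * (g : G)⁻¹ = ↑v} := by
        rcases Set.eq_empty_or_nonempty (MulAction.fixedBy Ω σ) with hFe | ⟨ω₀, hω₀⟩
        · have hz : Nat.card (∅ : Set Ω) = 0 := by simp
          rw [hf, hFe]
          exact hz.le.trans (Nat.zero_le _)
        · obtain ⟨v₀, hv₀⟩ := htrans ω₀
          rw [MulAction.mem_fixedBy] at hω₀
          have hfix0 : (g : G) * v₀ * (g : G)⁻¹ * u₀ = (v₀ : G) := by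
            apply (hfixchar v₀).mp
            rw [hv₀]
            exact hω₀
          have e0 : (g : G) * ↑v₀ * (g : G)⁻¹ = ↑v₀ * (↑u₀ : G)⁻¹ :=
            eq_mul_inv_of_mul_eq hfix0
          have hcond : ∀ ω : Ω, ω ∈ MulAction.fixedBy Ω σ →
              (g : G) * ↑((htrans ω).choose * v₀⁻¹) * (g : G)⁻¹ = ↑((htrans ω).choose * v₀⁻¹) := by
            intro ω hω
            rw [MulAction.mem_fixedBy] at hω
            set w := (htrans ω).choose with hwdef
            have hw : (w : G) • α = ω := (htrans ω).choose_spec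
            have hgw : (g : G) * w * (g : G)⁻¹ * u₀ = (w : G) := by
              apply (hfixchar w).mp
              rw [hw]
              exact hω
            have e1 : (g : G) * ↑w * (g : G)⁻¹ = ↑w * (↑u₀ : G)⁻¹ :=
              eq_mul_inv_of_mul_eq hgw
            have hco : (↑(w * v₀⁻¹) : G) = ↑w * (↑v₀ : G)⁻¹ := by
              simp
            rw [hco]
            calc (g : G) * (↑w * (↑v₀ : G)⁻¹) * (g : G)⁻¹
                = ((g : G) * ↑w * (g : G)⁻¹) * ((g : G) * ↑v₀ * (g : G)⁻¹)⁻¹ := by group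
              _ = (↑w * (↑u₀ : G)⁻¹) * (↑v₀ * (↑u₀ : G)⁻¹)⁻¹ := by rw [e1, e0]
              _ = ↑w * (↑v₀ : G)⁻¹ := by group
          let Ψ : MulAction.fixedBy Ω σ → {v : A // (g : G) * ↑v * (g : G)⁻¹ = ↑v} :=
            fun ω => ⟨(htrans ↑ω).choose * v₀⁻¹, hcond ↑ω ω.2⟩
          have hinj : Function.Injective Ψ := by
            intro ω ω' h
            have h1 : (htrans (ω : Ω)).choose = (htrans (ω' : Ω)).choose := by
              have h2 : ((htrans (ω : Ω)).choose * v₀⁻¹ : A) = (htrans (ω' : Ω)).choose * v₀⁻¹ :=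
                congrArg Subtype.val h
              exact mul_right_cancel h2
            apply Subtype.ext
            rw [← (htrans (ω : Ω)).choose_spec, ← (htrans (ω' : Ω)).choose_spec, h1]
          exact Nat.card_le_card_of_injective Ψ hinj
      omega
  -- Claim 2 : Burnside
  have hBur : cQ * p = n + (p-1) * f := by
    letI : Fintype (Subgroup.zpowers σ) := Fintype.ofFinite _
    letI : ∀ a : Subgroup.zpowers σ, Fintype (MulAction.fixedBy Ω a) := fun a => Fintype.ofFinite _
    letI : Fintype (MulAction.orbitRel.Quotient (Subgroup.zpowers σ) Ω) := Fintype.ofFinite _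
    have hBurn := MulAction.sum_card_fixedBy_eq_card_orbits_mul_card_group (Subgroup.zpowers σ) Ω
    have hcardK : Fintype.card (Subgroup.zpowers σ) = p := by
      rw [← Nat.card_eq_fintype_card, Nat.card_zpowers, hordσ]
    -- all nontrivial elements of the cyclic group have the same fixed-point set
    have hfix1 : ∀ a : Subgroup.zpowers σ, a ≠ 1 →
        MulAction.fixedBy Ω a = MulAction.fixedBy Ω σ := by
      intro a ha
      haveI : Fact (Nat.Prime p) := ⟨hp⟩
      have haord : orderOf a = p := by
        refine orderOf_eq_prime ?_ ha
        rw [← hcardK]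
        exact pow_card_eq_one
      have htop : Subgroup.zpowers a = (⊤ : Subgroup (Subgroup.zpowers σ)) := by
        apply Subgroup.eq_top_of_card_eq
        rw [Nat.card_zpowers, haord, Nat.card_eq_fintype_card, hcardK]
      have hσa : ∃ i : ℤ, (a : Equiv.Perm Ω) ^ i = σ := by
        have h1 : (⟨σ, Subgroup.mem_zpowers σ⟩ : Subgroup.zpowers σ) ∈ Subgroup.zpowers a := by
          rw [htop]; trivial
        obtain ⟨i, hi⟩ := Subgroup.mem_zpowers_iff.mp h1
        refine ⟨i, ?_⟩
        have h2 := congrArg Subtype.val hi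
        rwa [SubgroupClass.coe_zpow] at h2
      obtain ⟨i, hi⟩ := hσa
      ext ω
      simp only [MulAction.mem_fixedBy]
      constructor
      · intro hω
        have h2 : (a : Equiv.Perm Ω) ∈ MulAction.stabilizer (Equiv.Perm Ω) ω :=
          MulAction.mem_stabilizer_iff.mpr hω
        have h3 : Subgroup.zpowers (a : Equiv.Perm Ω) ≤ MulAction.stabilizer (Equiv.Perm Ω) ω :=
          Subgroup.zpowers_le.mpr h2
        have h4 : σ ∈ MulAction.stabilizer (Equiv.Perm Ω) ω :=
          h3 (Subgroup.mem_zpowers_iff.mpr ⟨i, hi⟩)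
        exact MulAction.mem_stabilizer_iff.mp h4
      · intro hω
        have h2 : σ ∈ MulAction.stabilizer (Equiv.Perm Ω) ω := MulAction.mem_stabilizer_iff.mpr hω
        have h3 : Subgroup.zpowers σ ≤ MulAction.stabilizer (Equiv.Perm Ω) ω :=
          Subgroup.zpowers_le.mpr h2
        exact MulAction.mem_stabilizer_iff.mp (h3 a.2)
    -- compute the sum
    have h1 : Fintype.card (MulAction.fixedBy Ω (1 : Subgroup.zpowers σ)) = n := by
      have huniv : MulAction.fixedBy Ω (1 : Subgroup.zpowers σ) = Set.univ := by
        ext ω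
        simp [MulAction.mem_fixedBy]
      rw [hn, ← Nat.card_eq_fintype_card, huniv]
      rw [← Nat.card_eq_fintype_card]
      exact Nat.card_congr (Equiv.Set.univ Ω)
    have h2 : ∀ a : Subgroup.zpowers σ, a ≠ 1 → Fintype.card (MulAction.fixedBy Ω a) = f := by
      intro a ha
      rw [hf]
      calc Fintype.card (MulAction.fixedBy Ω a) = Nat.card (MulAction.fixedBy Ω a) :=
            (Nat.card_eq_fintype_card).symm
        _ = Nat.card (MulAction.fixedBy Ω σ) := by rw [hfix1 a ha]
    rw [← Finset.add_sum_erase Finset.univ _ (Finset.mem_univ (1 : Subgroup.zpowers σ))] at hBurn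
    have h3 : ∑ a ∈ Finset.univ.erase (1 : Subgroup.zpowers σ),
        Fintype.card (MulAction.fixedBy Ω a) = (p-1) * f := by
      rw [Finset.sum_congr rfl (fun a ha => h2 a (Finset.ne_of_mem_erase ha))]
      rw [Finset.sum_const, smul_eq_mul]
      congr 1
      rw [Finset.card_erase_of_mem (Finset.mem_univ _), Finset.card_univ, hcardK]
    rw [h1, h3] at hBurn
    rw [hcQ, Nat.card_eq_fintype_card, hBurn, hcardK]
  -- final arithmetic
  obtain ⟨q, rfl⟩ : ∃ q, p = q + 3 := ⟨p - 3, by omega⟩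
  have hBur' : cQ * (q+3) = n + (q+2) * f := by rw [hBur]; norm_num
  have d1 : 9 * (q*f) ≤ 3 * (q*n) := by
    calc 9 * (q*f) = 3*q*(3*f) := by ring
      _ ≤ 3*q*n := Nat.mul_le_mul_left _ h3f
      _ = 3*(q*n) := by ring
  have d3 : 9*cQ*(q+3) ≤ 5*n*(q+3) := by
    calc 9*cQ*(q+3) = 9*(cQ*(q+3)) := by ring
      _ = 9*(n + (q+2)*f) := by rw [hBur']
      _ = 9*n + 9*(q*f) + 18*f := by ring
      _ ≤ 9*n + 3*(q*n) + 6*n := by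
          have d2 : 18*f ≤ 6*n := by omega
          exact add_le_add (add_le_add le_rfl d1) d2
      _ ≤ 9*n + 5*(q*n) + 6*n := by
          have : 3*(q*n) ≤ 5*(q*n) := Nat.mul_le_mul_right _ (by omega)
          omega
      _ = 5*n*(q+3) := by ring
  have h9 : 9 * cQ ≤ 5 * n := Nat.le_of_mul_le_mul_right d3 (by omega)
  have h9' : (9 : ℝ) * cQ ≤ 5 * n := by exact_mod_cast h9
  linarith
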